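/- arXiv:2501.07698 — 2 statements merged into one kernel-verified Lean document; each statement's English description precedes it below -/
import Mathlib

section
/- There exists a countable family 𝓕 of chords of S¹ whose endpoints are pairwise distinct (no two chords of 𝓕 share an endpoint on S¹) such that the intersection graph of 𝓕 is isomorphic to the rational circle graph 𝒞_ℚ. -/
noncomputable section

/-- The unit circle in the complex plane. -/
def S1 : Set ℂ := {z : ℂ | ‖z‖ = 1}

/-- The closed segment in the plane spanned by an unordered pair of points. -/
def chordSegment : Sym2 ℂ → Set ℂ :=
  Sym2.lift ⟨fun a b => segment ℝ a b, fun a b => segment_symm ℝ a b⟩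

/-- A chord of the circle: an unordered pair of two distinct points of `S1`. -/
def Chord : Type := {p : Sym2 ℂ // (∀ z ∈ p, z ∈ S1) ∧ ¬ p.IsDiag}

/-- The circle graph: vertices are the chords of the circle, two distinct chords being
adjacent whenever their segments intersect. -/
def CircleGraph : SimpleGraph Chord where
  Adj C D := C ≠ D ∧ (chordSegment C.1 ∩ chordSegment D.1).Nonempty
  symm := ⟨fun C D ⟨h1, h2⟩ => ⟨h1.symm, by rwa [Set.inter_comm]⟩⟩
  loopless := ⟨fun C h => h.1 rfl⟩

/-- The rational points of the circle: the points `exp (2 π i q)` for `q : ℚ`. -/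
def Q1 : Set ℂ := {z : ℂ | ∃ q : ℚ, z = Complex.exp (2 * Real.pi * Complex.I * q)}

/-- A rational chord: an unordered pair of two distinct rational points of the circle. -/
def ChordQ : Type := {p : Sym2 ℂ // (∀ z ∈ p, z ∈ Q1) ∧ ¬ p.IsDiag}

/-- The rational circle graph: vertices are the rational chords, two distinct chords
being adjacent whenever their segments intersect. -/
def RationalCircleGraph : SimpleGraph ChordQ where
  Adj C D := C ≠ D ∧ (chordSegment C.1 ∩ chordSegment D.1).Nonempty
  symm := ⟨fun C D ⟨h1, h2⟩ => ⟨h1.symm, by rwa [Set.inter_comm]⟩⟩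
  loopless := ⟨fun C h => h.1 rfl⟩

open Complex Set

/-- point on unit circle at angle `2πt` -/
def cpt (t : ℝ) : ℂ := Complex.exp (2 * Real.pi * Complex.I * t)

lemma cpt_add (s t : ℝ) : cpt (s + t) = cpt s * cpt t := by
  rw [cpt, cpt, cpt, ← Complex.exp_add]; congr 1; push_cast; ring

lemma cpt_conj (t : ℝ) : (starRingEnd ℂ) (cpt t) = cpt (-t) := by
  rw [cpt, ← Complex.exp_conj]; congr 1
  have : (2 * Real.pi * Complex.I * t : ℂ) = ((2*Real.pi*t : ℝ):ℂ) * Complex.I := by push_cast; ring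
  rw [this, show (2 * Real.pi * Complex.I * (-t:ℝ) : ℂ) = ((2*Real.pi*(-t) : ℝ):ℂ) * Complex.I by push_cast; ring]
  rw [map_mul, Complex.conj_ofReal, Complex.conj_I]; push_cast; ring

lemma cpt_im (t : ℝ) : (cpt t).im = Real.sin (2 * Real.pi * t) := by
  rw [cpt, show (2 * Real.pi * Complex.I * t : ℂ) = ((2 * Real.pi * t : ℝ) : ℂ) * Complex.I by push_cast; ring]
  exact Complex.exp_ofReal_mul_I_im _

lemma cpt_re (t : ℝ) : (cpt t).re = Real.cos (2 * Real.pi * t) := by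
  rw [cpt, show (2 * Real.pi * Complex.I * t : ℂ) = ((2 * Real.pi * t : ℝ) : ℂ) * Complex.I by push_cast; ring]
  exact Complex.exp_ofReal_mul_I_re _

lemma cpt_zero : cpt 0 = 1 := by simp [cpt]

lemma cpt_norm (t : ℝ) : ‖cpt t‖ = 1 := by
  rw [cpt, Complex.norm_exp]
  norm_num [Complex.mul_re, Complex.mul_im]

lemma cpt_inj {s t : ℝ} (hs : s ∈ Ico (0:ℝ) 1) (ht : t ∈ Ico (0:ℝ) 1)
    (h : cpt s = cpt t) : s = t := by
  rw [cpt, cpt, Complex.exp_eq_exp_iff_exists_int] at h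
  obtain ⟨n, hn⟩ := h
  have hpi : (2 * Real.pi * Complex.I : ℂ) ≠ 0 := by
    simp [Complex.I_ne_zero, Real.pi_ne_zero]
  have h2 : (s : ℂ) = t + n := by
    have : 2 * Real.pi * Complex.I * s = 2 * Real.pi * Complex.I * (t + n) := by
      rw [hn]; ring
    exact mul_left_cancel₀ hpi this
  have h3 : s = t + n := by exact_mod_cast h2
  have : n = 0 := by
    rcases hs with ⟨hs0, hs1⟩; rcases ht with ⟨ht0, ht1⟩
    have : (n : ℝ) = s - t := by linarith
    have h4 : -1 < (n:ℝ) := by rw [this]; linarith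
    have h5 : (n:ℝ) < 1 := by rw [this]; linarith
    have h6 : (-1:ℝ) < (n:ℤ) := by exact_mod_cast h4
    have h7 : ((n:ℤ):ℝ) < 1 := by exact_mod_cast h5
    have h8 : (-1:ℤ) < n := by exact_mod_cast h6
    have h9 : (n:ℤ) < 1 := by exact_mod_cast h7
    omega
  simp [this] at h3; linarith

lemma sin_id (x y : ℝ) : Real.sin x + Real.sin y - Real.sin (x + y)
    = 4 * Real.sin (x/2) * Real.sin (y/2) * Real.sin ((x+y)/2) := by
  have hx : Real.sin x = 2 * Real.sin (x/2) * Real.cos (x/2) := by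
    rw [← Real.sin_two_mul]; congr 1; ring
  have hy : Real.sin y = 2 * Real.sin (y/2) * Real.cos (y/2) := by
    rw [← Real.sin_two_mul]; congr 1; ring
  have hxy : Real.sin (x+y) = 2 * Real.sin ((x+y)/2) * Real.cos ((x+y)/2) := by
    rw [← Real.sin_two_mul]; congr 1; ring
  have hs : Real.sin ((x+y)/2) = Real.sin (x/2) * Real.cos (y/2) + Real.cos (x/2) * Real.sin (y/2) := by
    rw [show (x+y)/2 = x/2 + y/2 by ring, Real.sin_add]
  have hc : Real.cos ((x+y)/2) = Real.cos (x/2) * Real.cos (y/2) - Real.sin (x/2) * Real.sin (y/2) := by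
    rw [show (x+y)/2 = x/2 + y/2 by ring, Real.cos_add]
  have p1 := Real.sin_sq_add_cos_sq (x/2)
  have p2 := Real.sin_sq_add_cos_sq (y/2)
  rw [hx, hy, hxy, hs, hc]
  linear_combination (-2*Real.sin (x/2)*Real.cos (x/2)) * p2 + (-2*Real.sin (y/2)*Real.cos (y/2)) * p1

lemma cross_eq (α β γ : ℝ) :
    ((cpt γ - cpt α) * (starRingEnd ℂ) (cpt β - cpt α)).im
    = 4 * Real.sin (Real.pi*(β-α)) * Real.sin (Real.pi*(γ-β)) * Real.sin (Real.pi*(γ-α)) := by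
  have key : (cpt γ - cpt α) * (starRingEnd ℂ) (cpt β - cpt α)
      = cpt (γ-β) - cpt (α-β) - cpt (γ-α) + 1 := by
    rw [map_sub, cpt_conj, cpt_conj, sub_mul, mul_sub, mul_sub,
      ← cpt_add, ← cpt_add, ← cpt_add, ← cpt_add,
      show γ + -β = γ - β by ring, show γ + -α = γ - α by ring,
      show α + -β = α - β by ring, show α + -α = 0 by ring, cpt_zero]
    ring
  rw [key]
  simp only [Complex.add_im, Complex.sub_im, Complex.one_im, cpt_im]
  have := sin_id (2*Real.pi*(β-α)) (2*Real.pi*(γ-β))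
  have e1 : Real.sin (2*Real.pi*(α-β)) = - Real.sin (2*Real.pi*(β-α)) := by
    rw [show 2*Real.pi*(α-β) = -(2*Real.pi*(β-α)) by ring, Real.sin_neg]
  have e2 : 2*Real.pi*(β-α) + 2*Real.pi*(γ-β) = 2*Real.pi*(γ-α) := by ring
  rw [e2] at this
  have e3 : 2*Real.pi*(β-α)/2 = Real.pi*(β-α) := by ring
  have e4 : 2*Real.pi*(γ-β)/2 = Real.pi*(γ-β) := by ring
  have e5 : 2*Real.pi*(γ-α)/2 = Real.pi*(γ-α) := by ring
  rw [e3, e4, e5] at this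
  rw [e1]; linarith

/-- affine expansion of the "signed area" functional along a segment -/
lemma im_affine (A m : ℂ) (u v : ℂ) (s : ℝ) :
    (((1-s) • u + s • v - A) * m).im = (1-s) * ((u - A) * m).im + s * ((v - A) * m).im := by
  have h : ((1-s) • u + s • v - A : ℂ) = ((1-s:ℝ):ℂ) * (u - A) + ((s:ℝ):ℂ) * (v - A) := by
    push_cast [Complex.real_smul]; ring
  rw [h, add_mul, Complex.add_im, mul_assoc, mul_assoc, Complex.im_ofReal_mul, Complex.im_ofReal_mul]

/-- Two segments whose endpoints strictly straddle each other's lines intersect. -/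
lemma segments_cross {A B C D : ℂ}
    (hf : ((C - A) * (starRingEnd ℂ) (B - A)).im * ((D - A) * (starRingEnd ℂ) (B - A)).im < 0)
    (hg : ((A - C) * (starRingEnd ℂ) (D - C)).im * ((B - C) * (starRingEnd ℂ) (D - C)).im < 0) :
    (segment ℝ A B ∩ segment ℝ C D).Nonempty := by
  set m := (starRingEnd ℂ) (B - A) with hm
  set n := (starRingEnd ℂ) (D - C) with hn
  set fC := ((C - A) * m).im with hfC
  set fD := ((D - A) * m).im with hfD
  set gA := ((A - C) * n).im with hgA
  set gB := ((B - C) * n).im with hgB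
  have hfCD : fC ≠ fD := by intro h; rw [h] at hf; nlinarith
  set s : ℝ := fC / (fC - fD) with hs
  have hs01 : 0 ≤ s ∧ s ≤ 1 := by
    rcases mul_neg_iff.1 hf with ⟨h1, h2⟩ | ⟨h1, h2⟩
    · constructor
      · apply div_nonneg (le_of_lt h1); linarith
      · rw [hs, div_le_one (by linarith)]; linarith
    · have he : s = (-fC)/(-(fC-fD)) := by rw [hs, neg_div_neg_eq]
      constructor
      · rw [he]; apply div_nonneg <;> linarith
      · rw [he, div_le_one (by linarith)]; linarith
  set z : ℂ := (1-s) • C + s • D with hz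
  have hzCD : z ∈ segment ℝ C D := ⟨1-s, s, by linarith [hs01.1, hs01.2], hs01.1, by ring, rfl⟩
  have hfz : ((z - A) * m).im = 0 := by
    have hd : fC - fD ≠ 0 := sub_ne_zero.2 hfCD
    rw [hz, im_affine, ← hfC, ← hfD, hs]
    field_simp
    ring
  -- z lies on line AB
  have hBA : B - A ≠ 0 := by
    intro h
    rw [hfC, hfD, hm, h] at hf
    simp at hf
  -- (z - A) * m is real, so z - A = r • (B - A)
  set k : ℝ := ((z - A) * m).re with hk
  have hzA : (z - A) * m = (k : ℂ) := Complex.ext rfl (by simpa using hfz)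
  have hmne : m ≠ 0 := by
    intro h0
    apply hBA
    have := congrArg (starRingEnd ℂ) h0
    rwa [hm, Complex.conj_conj, map_zero] at this
  have hzr : z - A = (k / Complex.normSq (B - A) : ℝ) • (B - A) := by
    have h1 : (z - A) * m * (B - A) = (k:ℂ) * (B - A) := by rw [hzA]
    have h2 : m * (B - A) = (Complex.normSq (B - A) : ℂ) := by
      rw [hm, mul_comm, Complex.mul_conj]
    have h3 : (z - A) * (Complex.normSq (B - A) : ℂ) = (k:ℂ) * (B - A) := by
      rw [← h2, ← mul_assoc]; exact h1
    have hns : (Complex.normSq (B - A) : ℂ) ≠ 0 := by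
      exact_mod_cast fun h => hBA (Complex.normSq_eq_zero.1 (by exact_mod_cast h))
    rw [Complex.real_smul]
    push_cast
    field_simp at h3 ⊢
    linear_combination h3
  set r : ℝ := k / Complex.normSq (B - A) with hr
  -- g z = 0 since z ∈ line CD
  have hgz : ((z - C) * n).im = 0 := by
    have h1 : z - C = (s:ℂ) * (D - C) := by rw [hz, Complex.real_smul, Complex.real_smul]; push_cast; ring
    rw [h1, mul_assoc, Complex.im_ofReal_mul, hn, Complex.mul_conj]
    simp
  -- affine expansion of g along line AB at parameter r
  have hgz2 : (1-r) * gA + r * gB = 0 := by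
    have h1 : z = (1-r) • A + r • B := by
      have : z = A + r • (B - A) := by rw [← hzr]; ring
      rw [this, Complex.real_smul, Complex.real_smul, Complex.real_smul]; push_cast; ring
    calc (1-r) * gA + r * gB = ((z - C) * n).im := by rw [h1, im_affine]
    _ = 0 := hgz
  have hr01 : 0 ≤ r ∧ r ≤ 1 := by
    rcases mul_neg_iff.1 hg with ⟨h1, h2⟩ | ⟨h1, h2⟩ <;>
      constructor <;> nlinarith [hgz2]
  have hzAB : z ∈ segment ℝ A B := by
    have h1 : z = (1-r) • A + r • B := by
      have : z = A + r • (B - A) := by rw [← hzr]; ring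
      rw [this, Complex.real_smul, Complex.real_smul, Complex.real_smul]; push_cast; ring
    exact ⟨1-r, r, by linarith [hr01.1, hr01.2], hr01.1, by ring, h1.symm⟩
  exact ⟨z, hzAB, hzCD⟩

open Real in
/-- cos x < cos (π d) for x in the open interval (π d, 2π - π d), 0 < d < 1 -/
lemma cos_lt {d x : ℝ} (hd0 : 0 < d) (hd1 : d < 1) (hx1 : π * d < x) (hx2 : x < 2*π - π*d) :
    Real.cos x < Real.cos (π * d) := by
  have hπ := Real.pi_pos
  rcases le_or_gt x π with hxπ | hxπ
  · exact Real.cos_lt_cos_of_nonneg_of_le_pi (by positivity) hxπ hx1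
  · have h1 : Real.cos x = Real.cos (2*π - x) := by
      rw [Real.cos_sub, Real.cos_two_pi, Real.sin_two_pi]; ring
    rw [h1]
    apply Real.cos_lt_cos_of_nonneg_of_le_pi (by positivity)
    · nlinarith
    · linarith

/-- the "far arc" separation: chord from angle α to β, points at angles γ δ in (β, α+1) -/
lemma segments_disjoint {α β γ δ : ℝ} (hαβ : 0 < β - α) (h1 : β - α < 1)
    (hγ1 : β < γ) (hγ2 : γ < α + 1) (hδ1 : β < δ) (hδ2 : δ < α + 1) :
    ∀ z, z ∈ segment ℝ (cpt α) (cpt β) → z ∈ segment ℝ (cpt γ) (cpt δ) → False := by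
  have hπ := Real.pi_pos
  set m : ℂ := cpt (-((α+β)/2)) with hm
  set c : ℝ := Real.cos (Real.pi * (β - α)) with hc
  have hval : ∀ t : ℝ, (m * cpt t).re = Real.cos (2*Real.pi*(t - (α+β)/2)) := by
    intro t
    rw [hm, ← cpt_add, show -((α+β)/2) + t = t - (α+β)/2 by ring, cpt_re]
  have hα : (m * cpt α).re = c := by
    rw [hval, hc, show 2*Real.pi*(α - (α+β)/2) = -(Real.pi*(β-α)) by ring, Real.cos_neg]
  have hβ : (m * cpt β).re = c := by
    rw [hval, hc, show 2*Real.pi*(β - (α+β)/2) = Real.pi*(β-α) by ring]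
  have houter : ∀ t : ℝ, β < t → t < α + 1 → (m * cpt t).re < c := by
    intro t ht1 ht2
    rw [hval, hc]
    apply cos_lt hαβ h1 <;> nlinarith
  have hre : ∀ (u v : ℂ) (a b : ℝ), 0 ≤ a → 0 ≤ b → a + b = 1 →
      (m * (a • u + b • v)).re = a * (m * u).re + b * (m * v).re := by
    intro u v a b _ _ _
    rw [show (a • u + b • v : ℂ) = (a:ℂ) * u + (b:ℂ) * v by
      rw [Complex.real_smul, Complex.real_smul]]
    rw [mul_add, Complex.add_re, mul_comm m ((a:ℂ)*u), mul_comm m ((b:ℂ)*v),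
      mul_assoc, mul_assoc, Complex.re_ofReal_mul, Complex.re_ofReal_mul]
    ring_nf
  rintro z ⟨a, b, ha, hb, hab, hz⟩ ⟨a', b', ha', hb', hab', hz'⟩
  have e1 : (m * z).re = c := by
    rw [← hz, hre _ _ a b ha hb hab, hα, hβ]; linear_combination c * hab
  have e2 : (m * z).re < c := by
    rw [← hz', hre _ _ a' b' ha' hb' hab']
    have g1 := houter γ hγ1 hγ2
    have g2 := houter δ hδ1 hδ2
    have k2 : b' * (m*cpt δ).re ≤ b' * c := mul_le_mul_of_nonneg_left g2.le hb'
    rcases lt_or_eq_of_le ha' with h0 | h0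
    · have k3 : a' * (m*cpt γ).re < a' * c := by
        exact mul_lt_mul_of_pos_left g1 h0
      have : a' * c + b' * c = c := by linear_combination c * hab'
      linarith
    · have hb1 : b' = 1 := by linarith
      rw [← h0, hb1]
      linarith
  linarith

lemma sinp_pos {x : ℝ} (h0 : 0 < x) (h1 : x < 1) : 0 < Real.sin (Real.pi * x) :=
  Real.sin_pos_of_pos_of_lt_pi (by positivity) (by nlinarith [Real.pi_pos])

lemma sinp_neg {x : ℝ} (h0 : -1 < x) (h1 : x < 0) : Real.sin (Real.pi * x) < 0 := by
  have : 0 < Real.sin (Real.pi * (-x)) := sinp_pos (by linarith) (by linarith)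
  rw [show Real.pi * (-x) = -(Real.pi * x) by ring, Real.sin_neg] at this
  linarith

lemma cpt_one : cpt 1 = 1 := by
  rw [cpt]; push_cast; rw [mul_one]; exact Complex.exp_two_pi_mul_I

lemma cpt_per (t : ℝ) : cpt (t + 1) = cpt t := by
  rw [cpt_add, cpt_one, mul_one]

lemma sign3_neg {x y z : ℝ} (hx : 0 < x) (hy : y < 0) (hz : 0 < z) : 4*x*y*z < 0 := by
  nlinarith [mul_neg_of_pos_of_neg (mul_pos hx hz) hy]

lemma sign3_pos {x y z : ℝ} (hx : 0 < x) (hy : 0 < y) (hz : 0 < z) : 0 < 4*x*y*z := by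
  nlinarith [mul_pos (mul_pos hx hz) hy]

lemma sign3_pos' {x y z : ℝ} (hx : 0 < x) (hy : y < 0) (hz : z < 0) : 0 < 4*x*y*z := by
  nlinarith [mul_pos hx (mul_pos_of_neg_of_neg hy hz)]

/-- crossing for interleaved angles a < b < c < d, d - a < 1 : chords (a,c) and (b,d) -/
lemma cross_of_interleave {a b c d : ℝ} (h1 : a < b) (h2 : b < c) (h3 : c < d) (h4 : d - a < 1) :
    (segment ℝ (cpt a) (cpt c) ∩ segment ℝ (cpt b) (cpt d)).Nonempty := by
  apply segments_cross (A := cpt a) (B := cpt c) (C := cpt b) (D := cpt d)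
  · rw [cross_eq, cross_eq]
    have s1 := sinp_pos (x := c - a) (by linarith) (by linarith)
    have s2 := sinp_neg (x := b - c) (by linarith) (by linarith)
    have s3 := sinp_pos (x := b - a) (by linarith) (by linarith)
    have s4 := sinp_pos (x := d - c) (by linarith) (by linarith)
    have s5 := sinp_pos (x := d - a) (by linarith) (by linarith)
    nlinarith [sign3_neg s1 s2 s3, sign3_pos s1 s4 s5]
  · rw [cross_eq, cross_eq]
    have s1 := sinp_pos (x := d - b) (by linarith) (by linarith)
    have s2 := sinp_neg (x := a - d) (by linarith) (by linarith)
    have s3 := sinp_neg (x := a - b) (by linarith) (by linarith)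
    have s4 := sinp_neg (x := c - d) (by linarith) (by linarith)
    have s5 := sinp_pos (x := c - b) (by linarith) (by linarith)
    nlinarith [sign3_pos' s1 s2 s3, sign3_neg s1 s4 s5]

/-- Master lemma: for four distinct angles in [0,1), sorted within each pair,
segments intersect iff interleaved -/
lemma master {p q r s : ℝ} (hp : p ∈ Ico (0:ℝ) 1) (hq : q ∈ Ico (0:ℝ) 1)
    (hr : r ∈ Ico (0:ℝ) 1) (hs : s ∈ Ico (0:ℝ) 1)
    (hpq : p < q) (hrs : r < s) (hpr : p ≠ r) (hps : p ≠ s) (hqr : q ≠ r) (hqs : q ≠ s) :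
    (segment ℝ (cpt p) (cpt q) ∩ segment ℝ (cpt r) (cpt s)).Nonempty ↔
      ((p < r ∧ r < q ∧ q < s) ∨ (r < p ∧ p < s ∧ s < q)) := by
  obtain ⟨hp0, hp1⟩ := hp; obtain ⟨hq0, hq1⟩ := hq
  obtain ⟨hr0, hr1⟩ := hr; obtain ⟨hs0, hs1⟩ := hs
  rcases lt_or_gt_of_ne hqr with h | h
  · -- q < r : sequential, disjoint
    constructor
    · rintro ⟨z, hz1, hz2⟩
      exact (segments_disjoint (α := p) (β := q) (by linarith) (by linarith)
        (by linarith) (by linarith) (by linarith) (by linarith) z hz1 hz2).elim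
    · rintro (⟨_, h2, _⟩ | ⟨h1, _, _⟩) <;> linarith
  · rcases lt_or_gt_of_ne hps with h' | h'
    · rcases lt_or_gt_of_ne hpr with hh | hh
      · rcases lt_or_gt_of_ne hqs with hhh | hhh
        · -- p < r < q < s : interleaved
          rw [iff_true_right (by left; exact ⟨hh, h, hhh⟩)]
          exact cross_of_interleave hh h hhh (by linarith)
        · -- p < r < s < q : nested, disjoint
          constructor
          · rintro ⟨z, hz1, hz2⟩
            refine (segments_disjoint (α := r) (β := s) (by linarith) (by linarith)
              (γ := q) (by linarith) (by linarith) (δ := p + 1) (by linarith) (by linarith)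
              z hz2 ?_).elim
            rw [segment_symm, cpt_per]
            exact hz1
          · rintro (⟨_, _, h3⟩ | ⟨h1, _, _⟩) <;> linarith
      · rcases lt_or_gt_of_ne hqs with hhh | hhh
        · -- r < p < q < s : nested, disjoint
          constructor
          · rintro ⟨z, hz1, hz2⟩
            refine (segments_disjoint (α := p) (β := q) (by linarith) (by linarith)
              (γ := s) (by linarith) (by linarith) (δ := r + 1) (by linarith) (by linarith)
              z hz1 ?_).elim
            rw [segment_symm, cpt_per]
            exact hz2
          · rintro (⟨h1, _, _⟩ | ⟨_, _, h3⟩) <;> linarith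
        · -- r < p < s < q : interleaved
          rw [iff_true_right (by right; exact ⟨hh, h', hhh⟩)]
          obtain ⟨z, hz1, hz2⟩ := cross_of_interleave hh h' hhh (by linarith)
          exact ⟨z, hz2, hz1⟩
    · -- s < p : sequential, disjoint
      constructor
      · rintro ⟨z, hz1, hz2⟩
        exact (segments_disjoint (α := r) (β := s) (by linarith) (by linarith)
          (by linarith) (by linarith) (by linarith) (by linarith) z hz2 hz1).elim
      · rintro (⟨h1, _, _⟩ | ⟨_, h2, _⟩) <;> linarith

instance : Countable (ℚ ×ₗ ℚ) := inferInstanceAs (Countable (ℚ × ℚ))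

def embQQ : (ℚ ×ₗ ℚ) ↪o ℝ :=
  (Order.embedding_from_countable_to_dense (α := ℚ ×ₗ ℚ) (β := ℝ)).some

def thetaL (p : ℚ ×ₗ ℚ) : ℝ := 1/2 + ((orderIsoIooNegOneOne ℝ) (embQQ p) : ℝ) / 4

lemma thetaL_strictMono : StrictMono thetaL := by
  intro a b h
  unfold thetaL
  have h1 : embQQ a < embQQ b := embQQ.lt_iff_lt.2 h
  have h2 := (orderIsoIooNegOneOne ℝ).lt_iff_lt.2 h1
  have h3 : ((orderIsoIooNegOneOne ℝ) (embQQ a) : ℝ) < ((orderIsoIooNegOneOne ℝ) (embQQ b) : ℝ) :=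
    Subtype.coe_lt_coe.2 h2
  linarith

def theta (x t : ℚ) : ℝ := thetaL (toLex (x, t))

lemma theta_mem (x t : ℚ) : theta x t ∈ Ioo (1/4 : ℝ) (3/4) := by
  have h := ((orderIsoIooNegOneOne ℝ) (embQQ (toLex (x, t)))).2
  obtain ⟨h1, h2⟩ := h
  constructor <;> · unfold theta thetaL; linarith

lemma theta_lt {x t x' t' : ℚ} :
    theta x t < theta x' t' ↔ (x < x' ∨ (x = x' ∧ t < t')) := by
  rw [theta, theta, thetaL_strictMono.lt_iff_lt, Prod.Lex.lt_iff]; exact Iff.rfl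

lemma theta_inj {x t x' t' : ℚ} (h : theta x t = theta x' t') : x = x' ∧ t = t' := by
  have := thetaL_strictMono.injective h
  have h2 : (x, t) = (x', t') := by
    have := congrArg ofLex this
    simpa using this
  exact ⟨congrArg Prod.fst h2, congrArg Prod.snd h2⟩


def cptq (q : ℚ) : ℂ := cpt (q : ℝ)

lemma cpt_int (n : ℤ) : cpt (n : ℝ) = 1 := by
  rw [cpt, show (2*Real.pi*Complex.I*((n:ℝ):ℂ) : ℂ) = n * (2*Real.pi*Complex.I) by push_cast; ring]
  exact Complex.exp_int_mul_two_pi_mul_I n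

lemma cptq_fract (q : ℚ) : cptq (Int.fract q) = cptq q := by
  rw [cptq, cptq, Int.fract,
    show (((q - ⌊q⌋ : ℚ)):ℝ) = (q:ℝ) + ((-⌊q⌋ : ℤ):ℝ) by push_cast; ring,
    cpt_add, cpt_int, mul_one]

lemma cptq_mem_Q1 (q : ℚ) : cptq q ∈ Q1 := ⟨q, by rw [cptq, cpt]; norm_num⟩

open scoped Classical in
def q1angle (z : ℂ) : ℚ := if h : z ∈ Q1 then Int.fract h.choose else 0

lemma q1angle_mem (z : ℂ) : q1angle z ∈ Ico (0:ℚ) 1 := by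
  unfold q1angle; split
  · exact ⟨Int.fract_nonneg _, Int.fract_lt_one _⟩
  · norm_num

lemma q1angle_spec {z : ℂ} (h : z ∈ Q1) : cptq (q1angle z) = z := by
  unfold q1angle
  rw [dif_pos h, cptq_fract]
  conv_rhs => rw [h.choose_spec]
  rw [cptq, cpt]
  norm_num

lemma cptq_inj {a b : ℚ} (ha : a ∈ Ico (0:ℚ) 1) (hb : b ∈ Ico (0:ℚ) 1)
    (h : cptq a = cptq b) : a = b := by
  have := cpt_inj (s := (a:ℝ)) (t := (b:ℝ))
    ⟨by exact_mod_cast ha.1, by exact_mod_cast ha.2⟩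
    ⟨by exact_mod_cast hb.1, by exact_mod_cast hb.2⟩ h
  exact_mod_cast this

/-- the perturbed endpoint of the chord `{a, b}` near angle `a` -/
def pim (a b : ℚ) : ℂ := cpt (theta a (Int.fract (b - a)))

lemma theta_mem01 (x t : ℚ) : theta x t ∈ Ico (0:ℝ) 1 := by
  obtain ⟨h1, h2⟩ := theta_mem x t
  constructor <;> linarith

lemma pim_inj {a b c d : ℚ} (h : pim a b = pim c d) :
    a = c ∧ Int.fract (b - a) = Int.fract (d - c) := by
  have := cpt_inj (theta_mem01 _ _) (theta_mem01 _ _) h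
  exact theta_inj this

lemma fract_mem {a b : ℚ} (ha : a ∈ Ico (0:ℚ) 1) (hb : b ∈ Ico (0:ℚ) 1) (hab : a ≠ b) :
    Int.fract (b - a) ∈ Ioo (0:ℚ) 1 := by
  obtain ⟨ha0, ha1⟩ := ha; obtain ⟨hb0, hb1⟩ := hb
  rcases lt_or_gt_of_ne hab with h | h
  · rw [Int.fract_eq_self.2 ⟨by linarith, by linarith⟩]
    constructor <;> linarith
  · have h1 : Int.fract (b - a) = b - a + 1 := by
      have h2 : Int.fract (b - a) = Int.fract ((b - a + 1) + ((-1 : ℤ):ℚ)) :=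
        congrArg Int.fract (by push_cast; ring)
      rw [h2, Int.fract_add_intCast, Int.fract_eq_self.2 ⟨by linarith, by linarith⟩]
    rw [h1]; constructor <;> linarith

lemma fract_lt {a b : ℚ} (ha : a ∈ Ico (0:ℚ) 1) (hb : b ∈ Ico (0:ℚ) 1) (hab : a < b) :
    Int.fract (b - a) = b - a := by
  obtain ⟨ha0, ha1⟩ := ha; obtain ⟨hb0, hb1⟩ := hb
  exact Int.fract_eq_self.2 ⟨by linarith, by linarith⟩

lemma fract_gt {a b : ℚ} (ha : a ∈ Ico (0:ℚ) 1) (hb : b ∈ Ico (0:ℚ) 1) (hab : b < a) :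
    Int.fract (b - a) = b - a + 1 := by
  obtain ⟨ha0, ha1⟩ := ha; obtain ⟨hb0, hb1⟩ := hb
  have h2 : Int.fract (b - a) = Int.fract ((b - a + 1) + ((-1 : ℤ):ℚ)) :=
    congrArg Int.fract (by push_cast; ring)
  rw [h2, Int.fract_add_intCast, Int.fract_eq_self.2 ⟨by linarith, by linarith⟩]

lemma pim_inj' {a b c d : ℚ} (ha : a ∈ Ico (0:ℚ) 1) (hb : b ∈ Ico (0:ℚ) 1)
    (hc : c ∈ Ico (0:ℚ) 1) (hd : d ∈ Ico (0:ℚ) 1) (hab : a ≠ b) (hcd : c ≠ d)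
    (h : pim a b = pim c d) : a = c ∧ b = d := by
  obtain ⟨h1, h2⟩ := pim_inj h
  subst h1
  refine ⟨rfl, ?_⟩
  rcases lt_or_gt_of_ne hab with hl | hl <;> rcases lt_or_gt_of_ne hcd with hl' | hl'
  · rw [fract_lt ha hb hl, fract_lt hc hd hl'] at h2; linarith
  · rw [fract_lt ha hb hl, fract_gt hc hd hl'] at h2
    obtain ⟨_, e1⟩ := hb; obtain ⟨e2, _⟩ := hd; obtain ⟨e3, _⟩ := ha
    linarith
  · rw [fract_gt ha hb hl, fract_lt hc hd hl'] at h2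
    obtain ⟨e0, _⟩ := hb; obtain ⟨_, e1⟩ := hd; obtain ⟨e3, e4⟩ := ha
    linarith
  · rw [fract_gt ha hb hl, fract_gt hc hd hl'] at h2; linarith

lemma sym2_rep (p : Sym2 ℂ) : ∃ z w, p = s(z, w) := by
  induction p using Sym2.ind with
  | _ z w => exact ⟨z, w, rfl⟩

/-- the perturbed chord map on unordered pairs -/
def chordIm : Sym2 ℂ → Sym2 ℂ :=
  Sym2.lift ⟨fun z w => s(pim (q1angle z) (q1angle w), pim (q1angle w) (q1angle z)),
    fun _ _ => Sym2.eq_swap⟩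

def Phi (C : ChordQ) : Chord := by
  refine ⟨chordIm C.1, ?_, ?_⟩
  · obtain ⟨z, w, hzw⟩ := sym2_rep C.1
    rw [hzw, chordIm, Sym2.lift_mk]
    intro u hu
    rcases Sym2.mem_iff.1 hu with h | h <;> · rw [h]; exact cpt_norm _
  · obtain ⟨z, w, hzw⟩ := sym2_rep C.1
    have hQ := C.2.1
    have hD := C.2.2
    rw [hzw] at hQ hD
    have hz : z ∈ Q1 := hQ z (Sym2.mem_iff.2 (Or.inl rfl))
    have hw : w ∈ Q1 := hQ w (Sym2.mem_iff.2 (Or.inr rfl))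
    have hzwne : z ≠ w := fun h => hD (Sym2.mk_isDiag_iff.2 h)
    have hab : q1angle z ≠ q1angle w := fun h => hzwne (by
      rw [← q1angle_spec hz, ← q1angle_spec hw, h])
    rw [hzw, chordIm, Sym2.lift_mk]
    intro h
    obtain ⟨h1, _⟩ := pim_inj (Sym2.mk_isDiag_iff.1 h)
    exact hab h1


lemma theta_lt_of_ne {x y u v : ℚ} (hxu : x ≠ u) : theta x y < theta u v ↔ x < u := by
  rw [theta_lt]
  constructor
  · rintro (h | ⟨h, _⟩)
    · exact h
    · exact absurd h hxu
  · exact Or.inl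

/-- The key equivalence: the perturbed chords intersect iff the original chords do. -/
lemma key {a b a' b' : ℚ} (ha : a ∈ Ico (0:ℚ) 1) (hb : b ∈ Ico (0:ℚ) 1)
    (ha' : a' ∈ Ico (0:ℚ) 1) (hb' : b' ∈ Ico (0:ℚ) 1)
    (hab : a < b) (hab' : a' < b') (hne : ¬(a = a' ∧ b = b')) :
    ((segment ℝ (pim a b) (pim b a) ∩ segment ℝ (pim a' b') (pim b' a')).Nonempty ↔
     (segment ℝ (cptq a) (cptq b) ∩ segment ℝ (cptq a') (cptq b')).Nonempty) := by
  obtain ⟨ha0, ha1⟩ := ha; obtain ⟨hb0, hb1⟩ := hb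
  obtain ⟨ha0', ha1'⟩ := ha'; obtain ⟨hb0', hb1'⟩ := hb'
  -- rewrite the fractional parts
  rw [pim, pim, pim, pim, fract_lt ⟨ha0, ha1⟩ ⟨hb0, hb1⟩ hab,
    fract_gt ⟨hb0, hb1⟩ ⟨ha0, ha1⟩ hab,
    fract_lt ⟨ha0', ha1'⟩ ⟨hb0', hb1'⟩ hab',
    fract_gt ⟨hb0', hb1'⟩ ⟨ha0', ha1'⟩ hab']
  set A1 := theta a (b - a) with hA1
  set B1 := theta b (a - b + 1) with hB1
  set A2 := theta a' (b' - a') with hA2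
  set B2 := theta b' (a' - b' + 1) with hB2
  have hA1B1 : A1 < B1 := theta_lt.2 (Or.inl hab)
  have hA2B2 : A2 < B2 := theta_lt.2 (Or.inl hab')
  have hA1A2 : A1 ≠ A2 := by
    intro h
    obtain ⟨h1, h2⟩ := theta_inj h
    exact hne ⟨h1, by linarith⟩
  have hA1B2 : A1 ≠ B2 := by
    intro h
    obtain ⟨h1, h2⟩ := theta_inj h
    -- a = b' and b - a = a' - b' + 1, so b = a' + 1 ≥ 1 > b, contradiction
    subst h1
    linarith
  have hB1A2 : B1 ≠ A2 := by
    intro h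
    obtain ⟨h1, h2⟩ := theta_inj h
    subst h1
    linarith
  have hB1B2 : B1 ≠ B2 := by
    intro h
    obtain ⟨h1, h2⟩ := theta_inj h
    exact hne ⟨by linarith, h1⟩
  have himaster := master (theta_mem01 a _) (theta_mem01 b _) (theta_mem01 a' _) (theta_mem01 b' _)
    hA1B1 hA2B2 hA1A2 hA1B2 hB1A2 hB1B2
  rw [himaster]
  -- now handle the original side, by cases on shared endpoints
  rcases eq_or_ne a a' with h1 | h1
  · -- a = a' : shared endpoint
    have hbb' : b ≠ b' := fun h => hne ⟨h1, h⟩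
    have hRHS : (segment ℝ (cptq a) (cptq b) ∩ segment ℝ (cptq a') (cptq b')).Nonempty :=
      ⟨cptq a, left_mem_segment _ _ _, by rw [← h1]; exact left_mem_segment _ _ _⟩
    rw [iff_true_right hRHS]
    subst h1
    rcases lt_or_gt_of_ne hbb' with h | h
    · left
      refine ⟨theta_lt.2 (Or.inr ⟨rfl, by linarith⟩), theta_lt.2 (Or.inl hab), theta_lt.2 (Or.inl h)⟩
    · right
      refine ⟨theta_lt.2 (Or.inr ⟨rfl, by linarith⟩), theta_lt.2 (Or.inl hab'), theta_lt.2 (Or.inl h)⟩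
  · rcases eq_or_ne b b' with h2 | h2
    · -- b = b' : shared endpoint
      have hRHS : (segment ℝ (cptq a) (cptq b) ∩ segment ℝ (cptq a') (cptq b')).Nonempty :=
        ⟨cptq b, right_mem_segment _ _ _, by rw [← h2]; exact right_mem_segment _ _ _⟩
      rw [iff_true_right hRHS]
      subst h2
      rcases lt_or_gt_of_ne h1 with h | h
      · left
        exact ⟨theta_lt.2 (Or.inl h), theta_lt.2 (Or.inl hab'), theta_lt.2 (Or.inr ⟨rfl, by linarith⟩)⟩
      · right
        exact ⟨theta_lt.2 (Or.inl h), theta_lt.2 (Or.inl hab), theta_lt.2 (Or.inr ⟨rfl, by linarith⟩)⟩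
    · rcases eq_or_ne b a' with h3 | h3
      · -- b = a' : shared endpoint, a < b = a' < b'
        have hRHS : (segment ℝ (cptq a) (cptq b) ∩ segment ℝ (cptq a') (cptq b')).Nonempty :=
          ⟨cptq b, right_mem_segment _ _ _, by rw [h3]; exact left_mem_segment _ _ _⟩
        rw [iff_true_right hRHS]
        subst h3
        left
        exact ⟨theta_lt.2 (Or.inl hab), theta_lt.2 (Or.inr ⟨rfl, by linarith⟩),
          theta_lt.2 (Or.inl hab')⟩
      · rcases eq_or_ne a b' with h4 | h4
        · -- a = b' : shared endpoint, a' < b' = a < b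
          have hRHS : (segment ℝ (cptq a) (cptq b) ∩ segment ℝ (cptq a') (cptq b')).Nonempty :=
            ⟨cptq a, left_mem_segment _ _ _, by rw [h4]; exact right_mem_segment _ _ _⟩
          rw [iff_true_right hRHS]
          subst h4
          right
          exact ⟨theta_lt.2 (Or.inl hab'), theta_lt.2 (Or.inr ⟨rfl, by linarith⟩),
            theta_lt.2 (Or.inl hab)⟩
        · -- all four angles distinct
          have homaster := master (p := (a:ℝ)) (q := (b:ℝ)) (r := (a':ℝ)) (s := (b':ℝ))
            ⟨by exact_mod_cast ha0, by exact_mod_cast ha1⟩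
            ⟨by exact_mod_cast hb0, by exact_mod_cast hb1⟩
            ⟨by exact_mod_cast ha0', by exact_mod_cast ha1'⟩
            ⟨by exact_mod_cast hb0', by exact_mod_cast hb1'⟩
            (by exact_mod_cast hab) (by exact_mod_cast hab')
            (by exact_mod_cast h1) (by exact_mod_cast h4)
            (by exact_mod_cast h3) (by exact_mod_cast h2)
          rw [show cptq a = cpt (a:ℝ) from rfl, show cptq b = cpt (b:ℝ) from rfl,
            show cptq a' = cpt (a':ℝ) from rfl, show cptq b' = cpt (b':ℝ) from rfl, homaster]
          rw [theta_lt_of_ne h1, theta_lt_of_ne (Ne.symm h3),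
            theta_lt_of_ne h2, theta_lt_of_ne (Ne.symm h1), theta_lt_of_ne h4,
            theta_lt_of_ne (Ne.symm h2)]
          constructor
          · rintro (⟨u, v, w⟩ | ⟨u, v, w⟩)
            · exact Or.inl ⟨by exact_mod_cast u, by exact_mod_cast v, by exact_mod_cast w⟩
            · exact Or.inr ⟨by exact_mod_cast u, by exact_mod_cast v, by exact_mod_cast w⟩
          · rintro (⟨u, v, w⟩ | ⟨u, v, w⟩)
            · exact Or.inl ⟨by exact_mod_cast u, by exact_mod_cast v, by exact_mod_cast w⟩
            · exact Or.inr ⟨by exact_mod_cast u, by exact_mod_cast v, by exact_mod_cast w⟩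


lemma q1angle_cptq {a : ℚ} (ha : a ∈ Ico (0:ℚ) 1) : q1angle (cptq a) = a :=
  cptq_inj (q1angle_mem _) ha (q1angle_spec (cptq_mem_Q1 a))

lemma chordQ_rep (C : ChordQ) : ∃ a b : ℚ, a ∈ Ico (0:ℚ) 1 ∧ b ∈ Ico (0:ℚ) 1 ∧ a < b ∧
    C.1 = s(cptq a, cptq b) := by
  obtain ⟨z, w, hzw⟩ := sym2_rep C.1
  have hQ := C.2.1
  have hD := C.2.2
  rw [hzw] at hQ hD
  have hz : z ∈ Q1 := hQ z (Sym2.mem_iff.2 (Or.inl rfl))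
  have hw : w ∈ Q1 := hQ w (Sym2.mem_iff.2 (Or.inr rfl))
  have hzwne : z ≠ w := fun h => hD (Sym2.mk_isDiag_iff.2 h)
  have hzs := q1angle_spec hz
  have hws := q1angle_spec hw
  have hne : q1angle z ≠ q1angle w := fun h => hzwne (by rw [← hzs, ← hws, h])
  rcases lt_or_gt_of_ne hne with h | h
  · exact ⟨q1angle z, q1angle w, q1angle_mem z, q1angle_mem w, h, by rw [hzw, hzs, hws]⟩
  · exact ⟨q1angle w, q1angle z, q1angle_mem w, q1angle_mem z, h, by
      rw [hzw, hzs, hws, Sym2.eq_swap]⟩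

lemma chordIm_mk (z w : ℂ) : chordIm s(z, w)
    = s(pim (q1angle z) (q1angle w), pim (q1angle w) (q1angle z)) := rfl

lemma chordIm_rep {a b : ℚ} (ha : a ∈ Ico (0:ℚ) 1) (hb : b ∈ Ico (0:ℚ) 1) :
    chordIm s(cptq a, cptq b) = s(pim a b, pim b a) := by
  rw [chordIm_mk, q1angle_cptq ha, q1angle_cptq hb]

lemma chordSegment_mk (z w : ℂ) : chordSegment s(z, w) = segment ℝ z w := by
  rw [chordSegment, Sym2.lift_mk]

lemma chordQ_eq_iff {C D : ChordQ} {a b a' b' : ℚ}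
    (ha : a ∈ Ico (0:ℚ) 1) (hb : b ∈ Ico (0:ℚ) 1)
    (ha' : a' ∈ Ico (0:ℚ) 1) (hb' : b' ∈ Ico (0:ℚ) 1)
    (hab : a < b) (hab' : a' < b')
    (hC : C.1 = s(cptq a, cptq b)) (hD : D.1 = s(cptq a', cptq b')) :
    C = D ↔ (a = a' ∧ b = b') := by
  constructor
  · intro h
    rw [h, hD] at hC
    rcases Sym2.eq_iff.1 hC.symm with ⟨e1, e2⟩ | ⟨e1, e2⟩
    · exact ⟨cptq_inj ha ha' e1, cptq_inj hb hb' e2⟩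
    · exfalso
      have f1 := cptq_inj ha hb' e1
      have f2 := cptq_inj hb ha' e2
      rw [← f2] at hab'
      have h5 := hab.trans hab'
      rw [f1] at h5
      exact lt_irrefl _ h5
  · rintro ⟨rfl, rfl⟩
    have : C.1 = D.1 := by rw [hC, hD]
    exact Subtype.ext this

lemma Phi_fst (C : ChordQ) : (Phi C).1 = chordIm C.1 := rfl

lemma pim_pair_eq {a b a' b' : ℚ} (ha : a ∈ Ico (0:ℚ) 1) (hb : b ∈ Ico (0:ℚ) 1)
    (ha' : a' ∈ Ico (0:ℚ) 1) (hb' : b' ∈ Ico (0:ℚ) 1)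
    (hab : a < b) (hab' : a' < b')
    (h : pim a b = pim a' b' ∨ pim a b = pim b' a' ∨ pim b a = pim a' b' ∨ pim b a = pim b' a') :
    a = a' ∧ b = b' := by
  rcases h with h | h | h | h
  · exact pim_inj' ha hb ha' hb' (ne_of_lt hab) (ne_of_lt hab') h
  · obtain ⟨e1, e2⟩ := pim_inj' ha hb hb' ha' (ne_of_lt hab) (ne_of_gt hab') h
    rw [e1] at hab; rw [← e2] at hab'
    exact absurd (hab.trans hab') (lt_irrefl _)
  · obtain ⟨e1, e2⟩ := pim_inj' hb ha ha' hb' (ne_of_gt hab) (ne_of_lt hab') h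
    rw [e1] at hab; rw [← e2] at hab'
    exact absurd (hab'.trans hab) (lt_irrefl _)
  · obtain ⟨e1, e2⟩ := pim_inj' hb ha hb' ha' (ne_of_gt hab) (ne_of_gt hab') h
    exact ⟨e2, e1⟩

lemma Phi_inj : Function.Injective Phi := by
  intro C D h
  obtain ⟨a, b, ha, hb, hab, hC⟩ := chordQ_rep C
  obtain ⟨a', b', ha', hb', hab', hD⟩ := chordQ_rep D
  have h1 : (Phi C).1 = (Phi D).1 := by rw [h]
  rw [Phi_fst, Phi_fst, hC, hD, chordIm_rep ha hb, chordIm_rep ha' hb'] at h1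
  have h2 := Sym2.eq_iff.1 h1
  have h3 : a = a' ∧ b = b' := by
    apply pim_pair_eq ha hb ha' hb' hab hab'
    rcases h2 with ⟨e1, _⟩ | ⟨e1, _⟩
    · exact Or.inl e1
    · exact Or.inr (Or.inl e1)
  exact (chordQ_eq_iff ha hb ha' hb' hab hab' hC hD).2 h3

lemma Phi_adj (C D : ChordQ) :
    CircleGraph.Adj (Phi C) (Phi D) ↔ RationalCircleGraph.Adj C D := by
  obtain ⟨a, b, ha, hb, hab, hC⟩ := chordQ_rep C
  obtain ⟨a', b', ha', hb', hab', hD⟩ := chordQ_rep D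
  show (Phi C ≠ Phi D ∧ _) ↔ (C ≠ D ∧ _)
  rcases eq_or_ne C D with rfl | hCD
  · simp
  · have hPhine : Phi C ≠ Phi D := fun h => hCD (Phi_inj h)
    rw [iff_true_intro hPhine, iff_true_intro hCD, true_and, true_and]
    have hne : ¬(a = a' ∧ b = b') := fun h => hCD ((chordQ_eq_iff ha hb ha' hb' hab hab' hC hD).2 h)
    have e1 : chordSegment (Phi C).1 = segment ℝ (pim a b) (pim b a) := by
      rw [Phi_fst, hC, chordIm_rep ha hb, chordSegment_mk]
    have e2 : chordSegment (Phi D).1 = segment ℝ (pim a' b') (pim b' a') := by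
      rw [Phi_fst, hD, chordIm_rep ha' hb', chordSegment_mk]
    have e3 : chordSegment C.1 = segment ℝ (cptq a) (cptq b) := by rw [hC, chordSegment_mk]
    have e4 : chordSegment D.1 = segment ℝ (cptq a') (cptq b') := by rw [hD, chordSegment_mk]
    rw [e1, e2, e3, e4]
    exact key ha hb ha' hb' hab hab' hne

instance : Countable ChordQ := by
  have : Function.Injective (fun C : ChordQ =>
      ((chordQ_rep C).choose, (chordQ_rep C).choose_spec.choose)) := by
    intro C D h
    obtain ⟨ha, hb, hab, hC⟩ := (chordQ_rep C).choose_spec.choose_spec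
    obtain ⟨ha', hb', hab', hD⟩ := (chordQ_rep D).choose_spec.choose_spec
    have h1 : (chordQ_rep C).choose = (chordQ_rep D).choose := congrArg Prod.fst h
    have h2 : (chordQ_rep C).choose_spec.choose = (chordQ_rep D).choose_spec.choose :=
      congrArg Prod.snd h
    exact (chordQ_eq_iff ha hb ha' hb' hab hab' hC hD).2 ⟨h1, h2⟩
  exact this.countable

/-- There is a countable family of chords of the circle, no two of
which share an endpoint, whose intersection graph is isomorphic to the rational circle
graph. -/
theorem exists_disjoint_endpoints_realisation :
    ∃ F : Set Chord, F.Countable ∧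
      (∀ C ∈ F, ∀ D ∈ F, C ≠ D → ∀ z : ℂ, ¬ (z ∈ C.1 ∧ z ∈ D.1)) ∧
      Nonempty ((CircleGraph.induce F) ≃g RationalCircleGraph) := by
  refine ⟨Set.range Phi, Set.countable_range Phi, ?_, ?_⟩
  · rintro C ⟨C0, rfl⟩ D ⟨D0, rfl⟩ hne z ⟨hz1, hz2⟩
    obtain ⟨a, b, ha, hb, hab, hC⟩ := chordQ_rep C0
    obtain ⟨a', b', ha', hb', hab', hD⟩ := chordQ_rep D0
    rw [Phi_fst, hC, chordIm_rep ha hb] at hz1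
    rw [Phi_fst, hD, chordIm_rep ha' hb'] at hz2
    rcases Sym2.mem_iff.1 hz1 with h | h <;> rcases Sym2.mem_iff.1 hz2 with h' | h' <;>
      [skip; skip; skip; skip] <;>
    · rw [h] at h'
      have h3 : a = a' ∧ b = b' := pim_pair_eq ha hb ha' hb' hab hab' (by tauto)
      exact hne (congrArg Phi ((chordQ_eq_iff ha hb ha' hb' hab hab' hC hD).2 h3))
  · refine ⟨⟨(Equiv.ofInjective Phi Phi_inj).symm, ?_⟩⟩
    intro x y
    have hx : Phi ((Equiv.ofInjective Phi Phi_inj).symm x) = x.1 :=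
      Equiv.apply_ofInjective_symm Phi_inj x
    have hy : Phi ((Equiv.ofInjective Phi Phi_inj).symm y) = y.1 :=
      Equiv.apply_ofInjective_symm Phi_inj y
    rw [← Phi_adj, hx, hy]
    rfl
end
end

section
/- Two chords of S¹ with all four endpoints distinct intersect if and only if their endpoint pairs interleave on the circle: the chord with endpoints c,d intersects the chord with endpoints a,b if and only if c and d lie in different connected components of S¹ \ {a,b}. -/
noncomputable section

open Real

def sfn (a b z : ℂ) : ℝ :=
  (z.im - a.im) * (b.re - a.re) - (z.re - a.re) * (b.im - a.im)

lemma sfn_self_left (a b : ℂ) : sfn a b a = 0 := by simp [sfn]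

lemma sfn_self_right (a b : ℂ) : sfn a b b = 0 := by simp [sfn]; ring

lemma sfn_comb (a b u v : ℂ) (t1 t2 : ℝ) (h : t1 + t2 = 1) :
    sfn a b (t1 • u + t2 • v) = t1 * sfn a b u + t2 * sfn a b v := by
  simp only [sfn, Complex.add_re, Complex.add_im, Complex.real_smul, Complex.mul_re,
    Complex.mul_im, Complex.ofReal_re, Complex.ofReal_im]
  linear_combination (a.im * (b.re - a.re) - a.re * (b.im - a.im)) * h

lemma norm_sq_one {z : ℂ} (h : ‖z‖ = 1) : z.re ^ 2 + z.im ^ 2 = 1 := by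
  have := Complex.sq_norm z
  rw [Complex.normSq_apply] at this
  rw [h] at this
  nlinarith [this]

lemma sfn_ne_zero {a b z : ℂ} (ha : ‖a‖ = 1) (hb : ‖b‖ = 1) (hz : ‖z‖ = 1)
    (hab : a ≠ b) (hza : z ≠ a) (hzb : z ≠ b) : sfn a b z ≠ 0 := by
  intro h0
  have ha' := norm_sq_one ha
  have hb' := norm_sq_one hb
  have hz' := norm_sq_one hz
  simp only [sfn] at h0
  obtain ⟨r, hr1, hr2⟩ : ∃ r : ℝ, z.re - a.re = r * (b.re - a.re) ∧
      z.im - a.im = r * (b.im - a.im) := by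
    by_cases hb1 : b.re - a.re = 0
    · have hb2 : b.im - a.im ≠ 0 := by
        intro h; exact hab (Complex.ext (by linarith) (by linarith))
      refine ⟨(z.im - a.im) / (b.im - a.im), ?_, ?_⟩
      · have hz1 : z.re - a.re = 0 := by
          have : (z.re - a.re) * (b.im - a.im) = 0 := by linear_combination -h0 + (z.im - a.im) * hb1
          rcases mul_eq_zero.mp this with h | h
          · exact h
          · exact absurd h hb2
        rw [hz1, hb1, mul_zero]
      · field_simp
    · refine ⟨(z.re - a.re) / (b.re - a.re), ?_, ?_⟩
      · field_simp
      · field_simp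
        linear_combination h0
  have e1 : z.re = a.re + r * (b.re - a.re) := by linarith
  have e2 : z.im = a.im + r * (b.im - a.im) := by linarith
  rw [e1, e2] at hz'
  have key : (a.re * b.re + a.im * b.im - 1) * (r * (1 - r)) = 0 := by
    linear_combination (1/2) * hz' + (r - 1/2 - r^2/2) * ha' + (-(r^2)/2) * hb'
  rcases mul_eq_zero.mp key with hS | hr
  · have hzero : (b.re - a.re) ^ 2 + (b.im - a.im) ^ 2 = 0 := by
      linear_combination ha' + hb' - 2 * hS
    have h1 : b.re = a.re := by nlinarith [sq_nonneg (b.re - a.re), sq_nonneg (b.im - a.im)]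
    have h2 : b.im = a.im := by nlinarith [sq_nonneg (b.re - a.re), sq_nonneg (b.im - a.im)]
    exact hab (Complex.ext h1.symm h2.symm)
  · rcases mul_eq_zero.mp hr with h | h
    · exact hza (Complex.ext (by rw [e1, h]; ring) (by rw [e2, h]; ring))
    · have hr1' : r = 1 := by linarith
      exact hzb (Complex.ext (by rw [e1, hr1']; ring) (by rw [e2, hr1']; ring))

lemma sym_identity {a b c d : ℂ} (ha : ‖a‖ = 1) (hb : ‖b‖ = 1) (hc : ‖c‖ = 1)
    (hd : ‖d‖ = 1) :
    sfn a b c * sfn a b d * ((d.re - c.re) ^ 2 + (d.im - c.im) ^ 2) =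
      sfn c d a * sfn c d b * ((b.re - a.re) ^ 2 + (b.im - a.im) ^ 2) := by
  have ha' := norm_sq_one ha
  have hb' := norm_sq_one hb
  have hc' := norm_sq_one hc
  have hd' := norm_sq_one hd
  simp only [sfn]
  linear_combination ((1)*c.im*d.im^3 + (1)*c.im*d.re^2*d.im + (-2)*c.im^2*d.im^2 + (-1)*c.im^2*d.re^2 + (1)*c.im^3*d.im + (-1)*c.re^2*d.im^2 + (1)*c.re^2*c.im*d.im + (-1)*b.im*d.im^3 + (-1)*b.im*d.re^2*d.im + (1)*b.im*c.im*d.im^2 + (1)*b.im*c.im^2*d.im + (-1)*b.im*c.im^3 + (1)*b.im*c.re*d.re*d.im + (1)*b.im*c.re*c.im*d.re + (-1)*b.im*c.re^2*c.im + (1)*b.im^2*d.im^2 + (1)*b.im^2*d.re^2 + (-2)*b.im^2*c.im*d.im + (1)*b.im^2*c.im^2 + (-2)*b.im^2*c.re*d.re + (1)*b.im^2*c.re^2 + (1)*b.re*c.im*d.re*d.im + (-1)*b.re*c.im^2*d.re + (-1)*b.re*c.re*d.im^2 + (1)*b.re*c.re*c.im*d.im + (-2)*b.re*b.im*d.re*d.im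 + (2)*b.re*b.im*c.im*d.re + (2)*b.re*b.im*c.re*d.im + (-2)*b.re*b.im*c.re*c.im + (2)*b.re^2*d.im^2 + (-4)*b.re^2*c.im*d.im + (2)*b.re^2*c.im^2 + (1)*a.im*c.im*d.re^2 + (-1)*a.im*c.re*d.re*d.im + (-1)*a.im*c.re*c.im*d.re + (1)*a.im*c.re^2*d.im + (-1)*a.im*b.im*d.re^2 + (2)*a.im*b.im*c.re*d.re + (-1)*a.im*b.im*c.re^2 + (1)*a.im*b.re*d.re*d.im + (-1)*a.im*b.re*c.im*d.re + (-1)*a.im*b.re*c.re*d.im + (1)*a.im*b.re*c.re*c.im + (-1)*a.re*c.im*d.re*d.im + (1)*a.re*c.im^2*d.re + (1)*a.re*c.re*d.im^2 + (-1)*a.re*c.re*c.im*d.im + (1)*a.re*b.im*d.re*d.im + (-1)*a.re*b.im*c.im*d.re + (-1)*a.re*b.im*c.re*d.im + (1)*a.re*b.im*c.re*c.im + (-1)*a.re*b.re*d.im^2 + (2)*a.re*b.re*c.im*d.im + (-1)*a.re*b.re*c.im^2) * ha' +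
      ((2)*d.im^2 + (-4)*c.im*d.im + (1)*c.im*d.im^3 + (1)*c.im*d.re^2*d.im + (2)*c.im^2 + (-2)*c.im^2*d.im^2 + (-1)*c.im^2*d.re^2 + (1)*c.im^3*d.im + (-1)*c.re^2*d.im^2 + (1)*c.re^2*c.im*d.im + (1)*b.im*c.im*d.re^2 + (-1)*b.im*c.re*d.re*d.im + (-1)*b.im*c.re*c.im*d.re + (1)*b.im*c.re^2*d.im + (-1)*b.re*c.im*d.re*d.im + (1)*b.re*c.im^2*d.re + (1)*b.re*c.re*d.im^2 + (-1)*b.re*c.re*c.im*d.im + (-1)*a.im*d.im^3 + (-1)*a.im*d.re^2*d.im + (1)*a.im*c.im*d.im^2 + (1)*a.im*c.im^2*d.im + (-1)*a.im*c.im^3 + (1)*a.im*c.re*d.re*d.im + (1)*a.im*c.re*c.im*d.re + (-1)*a.im*c.re^2*c.im + (-1)*a.im*b.im*d.re^2 + (2)*a.im*b.im*c.re*d.re + (-1)*a.im*b.im*c.re^2 + (1)*a.im*b.re*d.re*d.im + (-1)*a.im*b.re*c.im*d.re + (-1)*a.im*b.re*c.re*d.im + (1)*a.im*b.re*c.re*c.im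 + (-1)*a.im^2*d.im^2 + (1)*a.im^2*d.re^2 + (2)*a.im^2*c.im*d.im + (-1)*a.im^2*c.im^2 + (-2)*a.im^2*c.re*d.re + (1)*a.im^2*c.re^2 + (1)*a.re*c.im*d.re*d.im + (-1)*a.re*c.im^2*d.re + (-1)*a.re*c.re*d.im^2 + (1)*a.re*c.re*c.im*d.im + (1)*a.re*b.im*d.re*d.im + (-1)*a.re*b.im*c.im*d.re + (-1)*a.re*b.im*c.re*d.im + (1)*a.re*b.im*c.re*c.im + (-1)*a.re*b.re*d.im^2 + (2)*a.re*b.re*c.im*d.im + (-1)*a.re*b.re*c.im^2 + (-2)*a.re*a.im*d.re*d.im + (2)*a.re*a.im*c.im*d.re + (2)*a.re*a.im*c.re*d.im + (-2)*a.re*a.im*c.re*c.im) * hb' +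
      ((-2)*d.im^2 + (2)*c.im*d.im + (1)*b.im*d.im + (-1)*b.im*c.im + (1)*b.im^2 + (-2)*b.im^2*d.re^2 + (-1)*b.im^2*c.im*d.im + (1)*b.im^2*c.re*d.re + (2)*b.re*b.im*d.re*d.im + (-1)*b.re*b.im*c.im*d.re + (-1)*b.re*b.im*c.re*d.im + (1)*a.im*d.im + (-1)*a.im*c.im + (-2)*a.im*b.im + (2)*a.im*b.im*d.im^2 + (4)*a.im*b.im*d.re^2 + (-2)*a.im*b.im*c.re*d.re + (-1)*a.im*b.im^2*d.im + (1)*a.im*b.im^2*c.im + (-2)*a.im*b.re*d.re*d.im + (1)*a.im*b.re*c.im*d.re + (1)*a.im*b.re*c.re*d.im + (-1)*a.im*b.re*b.im*d.re + (1)*a.im*b.re*b.im*c.re + (1)*a.im^2 + (-2)*a.im^2*d.re^2 + (-1)*a.im^2*c.im*d.im + (1)*a.im^2*c.re*d.re + (-1)*a.im^2*b.im*d.im + (1)*a.im^2*b.im*c.im + (1)*a.im^2*b.re*d.re + (-1)*a.im^2*b.re*c.re + (-2)*a.re*b.im*d.re*d.im + (1)*a.re*b.im*c.im*d.re + (1)*a.re*b.im*c.re*d.im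 + (1)*a.re*b.im^2*d.re + (-1)*a.re*b.im^2*c.re + (2)*a.re*b.re*d.im^2 + (-2)*a.re*b.re*c.im*d.im + (-1)*a.re*b.re*b.im*d.im + (1)*a.re*b.re*b.im*c.im + (2)*a.re*a.im*d.re*d.im + (-1)*a.re*a.im*c.im*d.re + (-1)*a.re*a.im*c.re*d.im + (-1)*a.re*a.im*b.im*d.re + (1)*a.re*a.im*b.im*c.re + (-1)*a.re*a.im*b.re*d.im + (1)*a.re*a.im*b.re*c.im) * hc' +
      ((2)*c.im*d.im + (-2)*c.im^2 + (-1)*b.im*d.im + (1)*b.im*c.im + (-1)*b.im^2 + (-1)*b.im^2*c.im*d.im + (2)*b.im^2*c.im^2 + (1)*b.im^2*c.re*d.re + (-1)*b.re*b.im*c.im*d.re + (-1)*b.re*b.im*c.re*d.im + (2)*b.re*b.im*c.re*c.im + (-1)*a.im*d.im + (1)*a.im*c.im + (2)*a.im*b.im + (-2)*a.im*b.im*c.im^2 + (-2)*a.im*b.im*c.re*d.re + (1)*a.im*b.im^2*d.im + (-1)*a.im*b.im^2*c.im + (1)*a.im*b.re*c.im*d.re + (1)*a.im*b.re*c.re*d.im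 + (-2)*a.im*b.re*c.re*c.im + (1)*a.im*b.re*b.im*d.re + (-1)*a.im*b.re*b.im*c.re + (-1)*a.im^2 + (-1)*a.im^2*c.im*d.im + (2)*a.im^2*c.im^2 + (1)*a.im^2*c.re*d.re + (1)*a.im^2*b.im*d.im + (-1)*a.im^2*b.im*c.im + (-1)*a.im^2*b.re*d.re + (1)*a.im^2*b.re*c.re + (1)*a.re*b.im*c.im*d.re + (1)*a.re*b.im*c.re*d.im + (-2)*a.re*b.im*c.re*c.im + (-1)*a.re*b.im^2*d.re + (1)*a.re*b.im^2*c.re + (-2)*a.re*b.re*c.im*d.im + (2)*a.re*b.re*c.im^2 + (1)*a.re*b.re*b.im*d.im + (-1)*a.re*b.re*b.im*c.im + (-1)*a.re*a.im*c.im*d.re + (-1)*a.re*a.im*c.re*d.im + (2)*a.re*a.im*c.re*c.im + (1)*a.re*a.im*b.im*d.re + (-1)*a.re*a.im*b.im*c.re + (1)*a.re*a.im*b.re*d.im + (-1)*a.re*a.im*b.re*c.im) * hd'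


lemma dist_sq_pos {c d : ℂ} (h : c ≠ d) : 0 < (d.re - c.re) ^ 2 + (d.im - c.im) ^ 2 := by
  have h' : d.re - c.re ≠ 0 ∨ d.im - c.im ≠ 0 := by
    by_contra hcon
    push_neg at hcon
    exact h (Complex.ext (by linarith [hcon.1]) (by linarith [hcon.2]))
  rcases h' with h' | h'
  · have := lt_of_le_of_ne (sq_nonneg (d.re - c.re)) (Ne.symm (pow_ne_zero 2 h'))
    nlinarith [sq_nonneg (d.im - c.im)]
  · have := lt_of_le_of_ne (sq_nonneg (d.im - c.im)) (Ne.symm (pow_ne_zero 2 h'))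
    nlinarith [sq_nonneg (d.re - c.re)]

lemma sym_sign {a b c d : ℂ} (ha : ‖a‖ = 1) (hb : ‖b‖ = 1) (hc : ‖c‖ = 1)
    (hd : ‖d‖ = 1) (hab : a ≠ b) (hcd : c ≠ d)
    (h : sfn a b c * sfn a b d < 0) : sfn c d a * sfn c d b < 0 := by
  have hN1 := dist_sq_pos hcd
  have hN2 := dist_sq_pos hab
  have hid := sym_identity ha hb hc hd
  nlinarith [mul_neg_of_neg_of_pos h hN1]

lemma part1 {a b c d : ℂ} (ha : ‖a‖ = 1) (hb : ‖b‖ = 1) (hc : ‖c‖ = 1) (hd : ‖d‖ = 1)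
    (hab : a ≠ b) (hcd : c ≠ d) (hac : a ≠ c) (had : a ≠ d) (hbc : b ≠ c) (hbd : b ≠ d) :
    (segment ℝ a b ∩ segment ℝ c d).Nonempty ↔ sfn a b c * sfn a b d < 0 := by
  have hsc : sfn a b c ≠ 0 := sfn_ne_zero ha hb hc hab (Ne.symm hac) (Ne.symm hbc)
  have hsd : sfn a b d ≠ 0 := sfn_ne_zero ha hb hd hab (Ne.symm had) (Ne.symm hbd)
  constructor
  · rintro ⟨p, hp1, hp2⟩
    rw [segment_eq_image] at hp1 hp2
    obtain ⟨u, ⟨hu0, hu1⟩, hpu⟩ := hp1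
    obtain ⟨t, ⟨ht0, ht1⟩, hpt⟩ := hp2
    have hpu' : (1 - u) • a + u • b = p := hpu
    have hpt' : (1 - t) • c + t • d = p := hpt
    have hsp : sfn a b p = 0 := by
      rw [← hpu', sfn_comb a b a b (1 - u) u (by ring), sfn_self_left, sfn_self_right]; ring
    have h2 : (1 - t) * sfn a b c + t * sfn a b d = 0 := by
      rw [← sfn_comb a b c d (1 - t) t (by ring), hpt', hsp]
    have ht0' : t ≠ 0 := by
      intro h; rw [h] at h2; simp at h2; exact hsc h2
    have ht1' : t ≠ 1 := by
      intro h; rw [h] at h2; simp at h2; exact hsd h2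
    have h3 : 0 < t := lt_of_le_of_ne ht0 (Ne.symm ht0')
    have h4 : t < 1 := lt_of_le_of_ne ht1 ht1'
    have h5 : (1 - t) * (sfn a b c * sfn a b d) = -(t * sfn a b d ^ 2) := by
      linear_combination sfn a b d * h2
    have h6 : 0 < t * sfn a b d ^ 2 :=
      mul_pos h3 (lt_of_le_of_ne (sq_nonneg _) (Ne.symm (pow_ne_zero 2 hsd)))
    nlinarith
  · intro hs
    have hs' : sfn c d a * sfn c d b < 0 := sym_sign ha hb hc hd hab hcd hs
    have hsa : sfn c d a ≠ 0 := sfn_ne_zero hc hd ha hcd hac had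
    have hsb : sfn c d b ≠ 0 := sfn_ne_zero hc hd hb hcd hbc hbd
    -- t for segment cd
    have hne : sfn a b c - sfn a b d ≠ 0 := by
      intro h
      have : sfn a b c = sfn a b d := by linarith
      rw [this] at hs; nlinarith [sq_nonneg (sfn a b d)]
    set t : ℝ := sfn a b c / (sfn a b c - sfn a b d) with htdef0
    have htdef : t * (sfn a b c - sfn a b d) = sfn a b c := div_mul_cancel₀ _ hne
    have htIcc : 0 ≤ t ∧ t ≤ 1 := by
      rcases mul_neg_iff.mp hs with ⟨h1, h2⟩ | ⟨h1, h2⟩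
      · constructor
        · exact div_nonneg (le_of_lt h1) (by linarith)
        · exact (div_le_one (by linarith)).mpr (by linarith)
      · constructor
        · nlinarith [htdef]
        · nlinarith [htdef]
    have hne' : sfn c d a - sfn c d b ≠ 0 := by
      intro h
      have : sfn c d a = sfn c d b := by linarith
      rw [this] at hs'; nlinarith [sq_nonneg (sfn c d b)]
    set u : ℝ := sfn c d a / (sfn c d a - sfn c d b) with hudef0
    have hudef : u * (sfn c d a - sfn c d b) = sfn c d a := div_mul_cancel₀ _ hne'
    have huIcc : 0 ≤ u ∧ u ≤ 1 := by
      rcases mul_neg_iff.mp hs' with ⟨h1, h2⟩ | ⟨h1, h2⟩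
      · constructor
        · exact div_nonneg (le_of_lt h1) (by linarith)
        · exact (div_le_one (by linarith)).mpr (by linarith)
      · constructor
        · nlinarith [hudef]
        · nlinarith [hudef]
    set p : ℂ := (1 - t) • c + t • d with hpdef
    set q : ℂ := (1 - u) • a + u • b with hqdef
    have hp_cd : p ∈ segment ℝ c d := by
      rw [segment_eq_image]; exact ⟨t, ⟨htIcc.1, htIcc.2⟩, rfl⟩
    have hq_ab : q ∈ segment ℝ a b := by
      rw [segment_eq_image]; exact ⟨u, ⟨huIcc.1, huIcc.2⟩, rfl⟩
    have hsp : sfn a b p = 0 := by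
      rw [hpdef, sfn_comb a b c d (1 - t) t (by ring)]
      linear_combination -htdef
    have hsq : sfn c d q = 0 := by
      rw [hqdef, sfn_comb c d a b (1 - u) u (by ring)]
      linear_combination -hudef
    have hp_line : sfn c d p = 0 := by
      rw [hpdef, sfn_comb c d c d (1 - t) t (by ring), sfn_self_left, sfn_self_right]; ring
    have hq_line : sfn a b q = 0 := by
      rw [hqdef, sfn_comb a b a b (1 - u) u (by ring), sfn_self_left, sfn_self_right]; ring
    -- p = q
    have E1 : (p.im - q.im) * (b.re - a.re) - (p.re - q.re) * (b.im - a.im) = 0 := by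
      simp only [sfn] at hsp hq_line
      linear_combination hsp - hq_line
    have E2 : (p.im - q.im) * (d.re - c.re) - (p.re - q.re) * (d.im - c.im) = 0 := by
      simp only [sfn] at hp_line hsq
      linear_combination hp_line - hsq
    have hcross : (d.im - c.im) * (b.re - a.re) - (d.re - c.re) * (b.im - a.im) ≠ 0 := by
      intro h
      apply hne
      simp only [sfn]
      linear_combination -h
    have hX : (p.im - q.im) * ((d.im - c.im) * (b.re - a.re) - (d.re - c.re) * (b.im - a.im)) = 0 := by
      linear_combination (d.im - c.im) * E1 - (b.im - a.im) * E2
    have hY : (p.re - q.re) * ((d.im - c.im) * (b.re - a.re) - (d.re - c.re) * (b.im - a.im)) = 0 := by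
      linear_combination (d.re - c.re) * E1 - (b.re - a.re) * E2
    have hpq : p = q := by
      rcases mul_eq_zero.mp hX with h | h
      · rcases mul_eq_zero.mp hY with h' | h'
        · exact Complex.ext (by linarith) (by linarith)
        · exact absurd h' hcross
      · exact absurd h hcross
    exact ⟨p, by rw [hpq]; exact hq_ab, hp_cd⟩

noncomputable def eθ (θ : ℝ) : ℂ := Complex.exp (θ * Complex.I)

lemma norm_eθ (θ : ℝ) : ‖eθ θ‖ = 1 := by
  rw [eθ]
  exact Complex.norm_exp_ofReal_mul_I θ

lemma eθ_re (θ : ℝ) : (eθ θ).re = Real.cos θ := Complex.exp_ofReal_mul_I_re θ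

lemma eθ_im (θ : ℝ) : (eθ θ).im = Real.sin θ := Complex.exp_ofReal_mul_I_im θ

lemma eθ_periodic (x : ℝ) : eθ (x + 2 * π) = eθ x := by
  simp only [eθ]
  push_cast
  rw [add_mul, Complex.exp_add]
  have : Complex.exp (2 * π * Complex.I) = 1 := Complex.exp_two_pi_mul_I
  rw [this, mul_one]

lemma eθ_inj {x y : ℝ} (h : eθ x = eθ y) (hxy : |x - y| < 2 * π) : x = y := by
  obtain ⟨n, hn⟩ := Complex.exp_eq_exp_iff_exists_int.mp h
  have hre : x = y + n * (2 * π) := by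
    have := congrArg Complex.im hn
    simpa using this
  have hn0 : n = 0 := by
    by_contra hn0
    have h1 : (1 : ℝ) ≤ |(n : ℝ)| := by
      have := Int.one_le_abs hn0
      calc (1:ℝ) = ((1:ℤ):ℝ) := by norm_num
        _ ≤ ((|n| : ℤ) : ℝ) := by exact_mod_cast this
        _ = |(n:ℝ)| := by push_cast; ring
    have hxy' : x - y = (n : ℝ) * (2 * π) := by linarith [hre]
    have h2 : |x - y| = |(n:ℝ)| * (2 * π) := by
      rw [hxy', abs_mul, abs_of_pos (by positivity : (0:ℝ) < 2 * π)]
    nlinarith [pi_pos]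
  rw [hre, hn0]; push_cast; ring

lemma eθ_arg {z : ℂ} (hz : ‖z‖ = 1) : eθ (Complex.arg z) = z := by
  have := Complex.norm_mul_exp_arg_mul_I z
  rw [hz] at this
  simpa [eθ] using this


lemma sfn_eθ (α β θ : ℝ) :
    sfn (eθ α) (eθ β) (eθ θ) =
      4 * Real.sin ((β - α) / 2) * (Real.sin ((θ - α) / 2) * Real.sin ((θ - β) / 2)) := by
  simp only [sfn, eθ_re, eθ_im]
  have hsα : Real.sin α = 2 * Real.sin (α/2) * Real.cos (α/2) := by
    have := Real.sin_two_mul (α/2); rw [show 2 * (α/2) = α by ring] at this; exact this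
  have hsβ : Real.sin β = 2 * Real.sin (β/2) * Real.cos (β/2) := by
    have := Real.sin_two_mul (β/2); rw [show 2 * (β/2) = β by ring] at this; exact this
  have hsθ : Real.sin θ = 2 * Real.sin (θ/2) * Real.cos (θ/2) := by
    have := Real.sin_two_mul (θ/2); rw [show 2 * (θ/2) = θ by ring] at this; exact this
  have hcα : Real.cos α = 2 * Real.cos (α/2) ^ 2 - 1 := by
    have := Real.cos_two_mul (α/2); rw [show 2 * (α/2) = α by ring] at this; exact this
  have hcβ : Real.cos β = 2 * Real.cos (β/2) ^ 2 - 1 := by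
    have := Real.cos_two_mul (β/2); rw [show 2 * (β/2) = β by ring] at this; exact this
  have hcθ : Real.cos θ = 2 * Real.cos (θ/2) ^ 2 - 1 := by
    have := Real.cos_two_mul (θ/2); rw [show 2 * (θ/2) = θ by ring] at this; exact this
  have e1 : (β - α) / 2 = β/2 - α/2 := by ring
  have e2 : (θ - α) / 2 = θ/2 - α/2 := by ring
  have e3 : (θ - β) / 2 = θ/2 - β/2 := by ring
  rw [hsα, hsβ, hsθ, hcα, hcβ, hcθ, e1, e2, e3, Real.sin_sub, Real.sin_sub, Real.sin_sub]
  set sA := Real.sin (α/2); set cA := Real.cos (α/2)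
  set sB := Real.sin (β/2); set cB := Real.cos (β/2)
  set sT := Real.sin (θ/2); set cT := Real.cos (θ/2)
  have hA : sA ^ 2 + cA ^ 2 = 1 := Real.sin_sq_add_cos_sq (α/2)
  have hB : sB ^ 2 + cB ^ 2 = 1 := Real.sin_sq_add_cos_sq (β/2)
  have hT : sT ^ 2 + cT ^ 2 = 1 := Real.sin_sq_add_cos_sq (θ/2)
  linear_combination ((-4)*cB^2*sT*cT + (4)*sB*cB*cT^2) * hA +
    ((4)*cA^2*sT*cT + (-4)*sA*cA*cT^2) * hB +
    ((-4)*cA^2*sB*cB + (4)*sA*cA*cB^2) * hT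

noncomputable def E (θ : ℝ) : S1 := ⟨eθ θ, norm_eθ θ⟩

lemma continuous_E : Continuous E := by
  apply Continuous.subtype_mk
  exact Complex.continuous_exp.comp (by continuity)

lemma exists_param {α : ℝ} (hα1 : -π < α) (hα2 : α ≤ π) (z : S1) (hz : (z : ℂ) ≠ eθ α) :
    ∃ θ ∈ Set.Ioo α (α + 2 * π), (z : ℂ) = eθ θ := by
  have hz1 : ‖(z : ℂ)‖ = 1 := z.2
  have hzarg : eθ (Complex.arg (z : ℂ)) = (z : ℂ) := eθ_arg hz1
  have harg1 : -π < Complex.arg (z : ℂ) := Complex.neg_pi_lt_arg _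
  have harg2 : Complex.arg (z : ℂ) ≤ π := Complex.arg_le_pi _
  have hne : Complex.arg (z : ℂ) ≠ α := by
    intro h; exact hz (by rw [← hzarg, h])
  rcases lt_or_gt_of_ne hne with h | h
  · refine ⟨Complex.arg (z : ℂ) + 2 * π, ⟨by nlinarith [pi_pos], by nlinarith [pi_pos]⟩, ?_⟩
    rw [eθ_periodic, hzarg]
  · exact ⟨Complex.arg (z : ℂ), ⟨h, by nlinarith [pi_pos]⟩, hzarg.symm⟩

lemma part2 (a b c d : S1) (hab : a ≠ b) (hcd : c ≠ d) (hac : a ≠ c) (had : a ≠ d)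
    (hbc : b ≠ c) (hbd : b ≠ d) :
    connectedComponentIn ({a, b}ᶜ : Set S1) c ≠ connectedComponentIn ({a, b}ᶜ : Set S1) d ↔
      sfn (a : ℂ) (b : ℂ) (c : ℂ) * sfn (a : ℂ) (b : ℂ) (d : ℂ) < 0 := by
  have ha1 : ‖(a : ℂ)‖ = 1 := a.2
  have hb1 : ‖(b : ℂ)‖ = 1 := b.2
  have hc1 : ‖(c : ℂ)‖ = 1 := c.2
  have hd1 : ‖(d : ℂ)‖ = 1 := d.2
  have hab' : (a : ℂ) ≠ (b : ℂ) := fun h => hab (Subtype.ext h)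
  have hca' : (c : ℂ) ≠ (a : ℂ) := fun h => hac (Subtype.ext h.symm)
  have hcb' : (c : ℂ) ≠ (b : ℂ) := fun h => hbc (Subtype.ext h.symm)
  have hda' : (d : ℂ) ≠ (a : ℂ) := fun h => had (Subtype.ext h.symm)
  have hdb' : (d : ℂ) ≠ (b : ℂ) := fun h => hbd (Subtype.ext h.symm)
  have hsc : sfn a b c ≠ 0 := sfn_ne_zero ha1 hb1 hc1 hab' hca' hcb'
  have hsd : sfn a b d ≠ 0 := sfn_ne_zero ha1 hb1 hd1 hab' hda' hdb'
  have hcF : c ∈ ({a, b}ᶜ : Set S1) := by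
    simp only [Set.mem_compl_iff, Set.mem_insert_iff, Set.mem_singleton_iff]
    push_neg
    exact ⟨hac.symm, hbc.symm⟩
  have hdF : d ∈ ({a, b}ᶜ : Set S1) := by
    simp only [Set.mem_compl_iff, Set.mem_insert_iff, Set.mem_singleton_iff]
    push_neg
    exact ⟨had.symm, hbd.symm⟩
  have hg : Continuous (fun z : S1 => sfn (a : ℂ) (b : ℂ) (z : ℂ)) := by
    unfold sfn
    have h1 : Continuous (fun z : S1 => (z : ℂ).re) :=
      Complex.continuous_re.comp continuous_subtype_val
    have h2 : Continuous (fun z : S1 => (z : ℂ).im) :=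
      Complex.continuous_im.comp continuous_subtype_val
    continuity
  constructor
  · -- different components → opposite signs; contrapositive
    intro hne
    by_contra hcon
    apply hne
    have hpos : 0 < sfn a b c * sfn a b d :=
      lt_of_le_of_ne (not_lt.mp hcon) (Ne.symm (mul_ne_zero hsc hsd))
    -- set up arcs
    set α := Complex.arg (a : ℂ) with hαdef
    have haα : (a : ℂ) = eθ α := (eθ_arg ha1).symm
    have hα1 : -π < α := Complex.neg_pi_lt_arg _
    have hα2 : α ≤ π := Complex.arg_le_pi _
    obtain ⟨β, ⟨hβ1, hβ2⟩, hbβ⟩ := exists_param hα1 hα2 b (by rw [← haα]; exact fun h => hab (Subtype.ext h.symm))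
    obtain ⟨θc, ⟨hθc1, hθc2⟩, hcθ⟩ := exists_param hα1 hα2 c (by rw [← haα]; exact hca')
    obtain ⟨θd, ⟨hθd1, hθd2⟩, hdθ⟩ := exists_param hα1 hα2 d (by rw [← haα]; exact hda')
    have hθcβ : θc ≠ β := by
      intro h; exact hcb' (by rw [hcθ, h, ← hbβ])
    have hθdβ : θd ≠ β := by
      intro h; exact hdb' (by rw [hdθ, h, ← hbβ])
    -- sign lemmas on arcs
    have hKpos : 0 < Real.sin ((β - α) / 2) :=
      Real.sin_pos_of_pos_of_lt_pi (by linarith) (by linarith [pi_pos])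
    have harc1 : ∀ θ ∈ Set.Ioo α β, sfn (a : ℂ) (b : ℂ) (eθ θ) < 0 := by
      rintro θ ⟨h1, h2⟩
      rw [haα, hbβ, sfn_eθ]
      have hs1 : 0 < Real.sin ((θ - α) / 2) :=
        Real.sin_pos_of_pos_of_lt_pi (by linarith) (by linarith [pi_pos])
      have hs2 : Real.sin ((θ - β) / 2) < 0 := by
        rw [show (θ - β) / 2 = -((β - θ) / 2) by ring, Real.sin_neg, neg_lt, neg_zero]
        exact Real.sin_pos_of_pos_of_lt_pi (by linarith) (by linarith [pi_pos])
      nlinarith [mul_neg_of_pos_of_neg hKpos (mul_neg_of_pos_of_neg hs1 hs2)]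
    have harc2 : ∀ θ ∈ Set.Ioo β (α + 2 * π), 0 < sfn (a : ℂ) (b : ℂ) (eθ θ) := by
      rintro θ ⟨h1, h2⟩
      rw [haα, hbβ, sfn_eθ]
      have hs1 : 0 < Real.sin ((θ - α) / 2) :=
        Real.sin_pos_of_pos_of_lt_pi (by linarith) (by linarith [pi_pos])
      have hs2 : 0 < Real.sin ((θ - β) / 2) :=
        Real.sin_pos_of_pos_of_lt_pi (by linarith) (by linarith [pi_pos])
      nlinarith [mul_pos hKpos (mul_pos hs1 hs2)]
    -- arcs are inside {a,b}ᶜ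
    have hmem : ∀ θ ∈ Set.Ioo α (α + 2 * π), θ ≠ β → E θ ∈ ({a, b}ᶜ : Set S1) := by
      rintro θ ⟨h1, h2⟩ hθβ
      simp only [Set.mem_compl_iff, Set.mem_insert_iff, Set.mem_singleton_iff]
      push_neg
      constructor
      · intro h
        have : eθ θ = eθ α := by
          rw [show eθ θ = ((E θ : S1) : ℂ) from rfl, h, haα]
        have := eθ_inj this (by rw [abs_of_pos (by linarith)]; linarith)
        linarith [this]
      · intro h
        have : eθ θ = eθ β := by
          rw [show eθ θ = ((E θ : S1) : ℂ) from rfl, h, hbβ]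
        have h' := eθ_inj this (by rw [abs_lt]; constructor <;> linarith)
        exact hθβ h'
    -- preconnected arcs
    have harc1conn : IsPreconnected (E '' Set.Ioo α β) :=
      (isPreconnected_Ioo).image E continuous_E.continuousOn
    have harc2conn : IsPreconnected (E '' Set.Ioo β (α + 2 * π)) :=
      (isPreconnected_Ioo).image E continuous_E.continuousOn
    have hsub1 : E '' Set.Ioo α β ⊆ ({a, b}ᶜ : Set S1) := by
      rintro _ ⟨θ, ⟨h1, h2⟩, rfl⟩
      exact hmem θ ⟨h1, by linarith⟩ (by linarith)
    have hsub2 : E '' Set.Ioo β (α + 2 * π) ⊆ ({a, b}ᶜ : Set S1) := by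
      rintro _ ⟨θ, ⟨h1, h2⟩, rfl⟩
      exact hmem θ ⟨by linarith, h2⟩ (by linarith)
    have hcE : c = E θc := Subtype.ext hcθ
    have hdE : d = E θd := Subtype.ext hdθ
    -- case analysis: same arc
    have same_arc : ∀ (A : Set S1), IsPreconnected A → A ⊆ ({a, b}ᶜ : Set S1) →
        c ∈ A → d ∈ A →
        connectedComponentIn ({a, b}ᶜ : Set S1) c = connectedComponentIn ({a, b}ᶜ : Set S1) d := by
      intro A hA hAF hcA hdA
      have h1 : A ⊆ connectedComponentIn ({a, b}ᶜ : Set S1) c :=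
        hA.subset_connectedComponentIn hcA hAF
      exact connectedComponentIn_eq (h1 hdA)
    rcases lt_or_gt_of_ne hθcβ with hc' | hc' <;> rcases lt_or_gt_of_ne hθdβ with hd' | hd'
    · exact same_arc _ harc1conn hsub1 ⟨θc, ⟨hθc1, hc'⟩, hcE.symm⟩ ⟨θd, ⟨hθd1, hd'⟩, hdE.symm⟩
    · -- c in arc1 (sfn < 0), d in arc2 (sfn > 0): contradicts hpos
      exfalso
      have h1 := harc1 θc ⟨hθc1, hc'⟩
      have h2 := harc2 θd ⟨hd', hθd2⟩
      rw [← hcθ] at h1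
      rw [← hdθ] at h2
      nlinarith
    · exfalso
      have h1 := harc2 θc ⟨hc', hθc2⟩
      have h2 := harc1 θd ⟨hθd1, hd'⟩
      rw [← hcθ] at h1
      rw [← hdθ] at h2
      nlinarith
    · exact same_arc _ harc2conn hsub2 ⟨θc, ⟨hc', hθc2⟩, hcE.symm⟩ ⟨θd, ⟨hd', hθd2⟩, hdE.symm⟩
  · -- opposite signs → different components
    intro hs heq
    have hK : IsPreconnected (connectedComponentIn ({a, b}ᶜ : Set S1) c) :=
      isPreconnected_connectedComponentIn
    have hcK : c ∈ connectedComponentIn ({a, b}ᶜ : Set S1) c := mem_connectedComponentIn hcF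
    have hdK : d ∈ connectedComponentIn ({a, b}ᶜ : Set S1) c := by
      rw [heq]; exact mem_connectedComponentIn hdF
    have hKF := connectedComponentIn_subset ({a, b}ᶜ : Set S1) (c : S1)
    obtain ⟨z, hzK, hz0⟩ : ∃ z ∈ connectedComponentIn ({a, b}ᶜ : Set S1) c,
        sfn (a : ℂ) (b : ℂ) (z : ℂ) = 0 := by
      rcases mul_neg_iff.mp hs with ⟨h1, h2⟩ | ⟨h1, h2⟩
      · have := hK.intermediate_value hdK hcK hg.continuousOn
        obtain ⟨z, hzK, hz⟩ := this ⟨le_of_lt h2, le_of_lt h1⟩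
        exact ⟨z, hzK, hz⟩
      · have := hK.intermediate_value hcK hdK hg.continuousOn
        obtain ⟨z, hzK, hz⟩ := this ⟨le_of_lt h1, le_of_lt h2⟩
        exact ⟨z, hzK, hz⟩
    have hzF := hKF hzK
    simp only [Set.mem_compl_iff, Set.mem_insert_iff, Set.mem_singleton_iff] at hzF
    push_neg at hzF
    exact sfn_ne_zero ha1 hb1 z.2 hab' (fun h => hzF.1 (Subtype.ext h))
      (fun h => hzF.2 (Subtype.ext h)) hz0

/-- Two chords with four pairwise distinct endpoints intersect iff
their endpoints interleave on the circle, i.e. iff `c` and `d` lie in different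
connected components of `S¹ \ {a, b}`. -/
theorem chords_intersect_iff_interleaved (a b c d : S1)
    (hab : a ≠ b) (hcd : c ≠ d) (hac : a ≠ c) (had : a ≠ d) (hbc : b ≠ c) (hbd : b ≠ d) :
    (segment ℝ (a : ℂ) (b : ℂ) ∩ segment ℝ (c : ℂ) (d : ℂ)).Nonempty ↔
      connectedComponentIn ({a, b}ᶜ : Set S1) c ≠
        connectedComponentIn ({a, b}ᶜ : Set S1) d := by
  have hab' : (a : ℂ) ≠ (b : ℂ) := fun h => hab (Subtype.ext h)
  have hcd' : (c : ℂ) ≠ (d : ℂ) := fun h => hcd (Subtype.ext h)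
  have hac' : (a : ℂ) ≠ (c : ℂ) := fun h => hac (Subtype.ext h)
  have had' : (a : ℂ) ≠ (d : ℂ) := fun h => had (Subtype.ext h)
  have hbc' : (b : ℂ) ≠ (c : ℂ) := fun h => hbc (Subtype.ext h)
  have hbd' : (b : ℂ) ≠ (d : ℂ) := fun h => hbd (Subtype.ext h)
  rw [part1 a.2 b.2 c.2 d.2 hab' hcd' hac' had' hbc' hbd']
  exact (part2 a b c d hab hcd hac had hbc hbd).symm
end
end
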